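/- Assume all relations are ≤ and that all off-diagonal elements of every B_k (0 ≤ k ≤ m), viewed as (n+1)×(n+1) matrices, are nonpositive. Then the SDP relaxation is exact for every right-hand side: η(δ) = ζ(δ) for every δ ∈ ℝ^m. -/

import Mathlib

open Matrix BigOperators

noncomputable section

/-- Trace inner product `⟨A,X⟩ = Σᵢⱼ Aᵢⱼ Xᵢⱼ`. -/
def mInner {N : ℕ} (A X : Matrix (Fin N) (Fin N) ℝ) : ℝ :=
  ∑ i, ∑ j, A i j * X i j

/-- The quadratic function `u ↦ (u,1)ᵀ B (u,1)` on `ℝⁿ`. -/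
def quadF {n : ℕ} (B : Matrix (Fin (n + 1)) (Fin (n + 1)) ℝ) (u : Fin n → ℝ) : ℝ :=
  Fin.snoc u 1 ⬝ᵥ (B *ᵥ Fin.snoc u 1)

/-- A relation on `ℝ` is standard if it is `≤`, `=`, or `≥`. -/
def IsStdRel (r : ℝ → ℝ → Prop) : Prop :=
  r = (· ≤ ·) ∨ r = (· = ·) ∨ r = (· ≥ ·)

section Single

variable (nn m : ℕ) (B : Fin (m + 1) → Matrix (Fin (nn + 1)) (Fin (nn + 1)) ℝ)

/-- Feasibility of `u` for QCQP(δ) (all relations `≤`). -/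
def qcqpFeas (δ : Fin m → ℝ) (u : Fin nn → ℝ) : Prop :=
  ∀ k : Fin m, quadF (B k.succ) u ≤ δ k

/-- The optimal value `ζ(δ)` of QCQP(δ). -/
def qcqpVal (δ : Fin m → ℝ) : EReal :=
  sInf {y : EReal | ∃ u : Fin nn → ℝ,
    qcqpFeas nn m B δ u ∧ y = ((quadF (B 0) u : ℝ) : EReal)}

/-- Feasibility of `X` for the Shor relaxation SDPR(δ). -/
def sdprFeas (δ : Fin m → ℝ) (X : Matrix (Fin (nn + 1)) (Fin (nn + 1)) ℝ) : Prop :=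
  X.PosSemidef ∧ X (Fin.last nn) (Fin.last nn) = 1 ∧
    ∀ k : Fin m, mInner (B k.succ) X ≤ δ k

/-- The optimal value `η(δ)` of SDPR(δ). -/
def sdprVal (δ : Fin m → ℝ) : EReal :=
  sInf {y : EReal | ∃ X : Matrix (Fin (nn + 1)) (Fin (nn + 1)) ℝ,
    sdprFeas nn m B δ X ∧ y = ((mInner (B 0) X : ℝ) : EReal)}

end Single

lemma quadF_eq_mInner {n : ℕ} (B : Matrix (Fin (n+1)) (Fin (n+1)) ℝ) (u : Fin n → ℝ) :
    quadF B u = mInner B (Matrix.of fun i j => (Fin.snoc u 1 : Fin (n+1) → ℝ) i * (Fin.snoc u 1 : Fin (n+1) → ℝ) j) := by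
  unfold quadF mInner Matrix.mulVec dotProduct
  refine Finset.sum_congr rfl fun i _ => ?_
  rw [Finset.mul_sum]
  refine Finset.sum_congr rfl fun j _ => ?_
  simp [Matrix.of_apply]; ring

lemma posSemidef_outer {N : ℕ} (v : Fin N → ℝ) :
    (Matrix.of fun i j => v i * v j).PosSemidef := by
  refine Matrix.posSemidef_iff_dotProduct_mulVec.mpr ⟨?_, ?_⟩
  · ext i j
    simp [Matrix.conjTranspose_apply, mul_comm]
  · intro x
    have h : dotProduct (star x) ((Matrix.of fun i j => v i * v j) *ᵥ x)
        = (v ⬝ᵥ x) * (v ⬝ᵥ x) := by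
      unfold Matrix.mulVec dotProduct
      simp only [star_trivial, Matrix.of_apply, Finset.sum_mul, Finset.mul_sum, mul_assoc]
      rw [Finset.sum_comm]
      refine Finset.sum_congr rfl fun i _ => ?_
      refine Finset.sum_congr rfl fun j _ => ?_
      ring
    rw [h]
    exact mul_self_nonneg _

lemma psd_diag_nonneg {N : ℕ} {X : Matrix (Fin N) (Fin N) ℝ} (hX : X.PosSemidef)
    (i : Fin N) : 0 ≤ X i i := by
  have := hX.dotProduct_mulVec_nonneg (Pi.single i 1)
  simpa [Matrix.mulVec_single, dotProduct_single, single_dotProduct] using this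

lemma psd_entry_le {N : ℕ} {X : Matrix (Fin N) (Fin N) ℝ} (hX : X.PosSemidef) (i j : Fin N) :
    X i j ≤ Real.sqrt (X i i) * Real.sqrt (X j j) := by
  by_cases hij : i = j
  · subst hij
    rw [Real.mul_self_sqrt (psd_diag_nonneg hX i)]
  · have hsymm : X j i = X i j := by
      have := hX.1
      rw [Matrix.IsHermitian] at this
      have h2 := congrFun (congrFun this j) i
      simpa [Matrix.conjTranspose_apply] using h2.symm
    have hq : ∀ t : ℝ, 0 ≤ X i i * (t * t) + (2 * X i j) * t + X j j := by
      intro t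
      have := hX.dotProduct_mulVec_nonneg (t • (Pi.single i 1 : Fin N → ℝ) + Pi.single j 1)
      have hval : dotProduct (star (t • (Pi.single i 1 : Fin N → ℝ) + Pi.single j 1))
          (X *ᵥ (t • (Pi.single i 1 : Fin N → ℝ) + Pi.single j 1))
          = X i i * (t * t) + (2 * X i j) * t + X j j := by
        rw [Matrix.mulVec_add, Matrix.mulVec_smul]
        simp only [star_trivial, Matrix.mulVec_single, mul_one]
        rw [add_dotProduct, smul_dotProduct]
        simp only [dotProduct_add, single_dotProduct, Pi.add_apply, Pi.smul_apply,
          smul_eq_mul]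
        simp [hsymm]
        ring
      rw [hval] at this
      exact this
    have hd := discrim_le_zero hq
    rw [discrim] at hd
    have hsq : X i j ^ 2 ≤ X i i * X j j := by nlinarith
    calc X i j ≤ |X i j| := le_abs_self _
      _ = Real.sqrt (X i j ^ 2) := (Real.sqrt_sq_eq_abs _).symm
      _ ≤ Real.sqrt (X i i * X j j) := Real.sqrt_le_sqrt hsq
      _ = Real.sqrt (X i i) * Real.sqrt (X j j) :=
          Real.sqrt_mul (psd_diag_nonneg hX i) _

lemma snoc_sqrt_diag {N : ℕ} {X : Matrix (Fin (N+1)) (Fin (N+1)) ℝ}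
    (hc : X (Fin.last N) (Fin.last N) = 1) (i : Fin (N+1)) :
    (Fin.snoc (fun i : Fin N => Real.sqrt (X i.castSucc i.castSucc)) 1 : Fin (N+1) → ℝ) i
      = Real.sqrt (X i i) := by
  refine Fin.lastCases ?_ (fun i => ?_) i
  · simp [Fin.snoc_last, hc]
  · simp [Fin.snoc_castSucc]

/-- **Corollary 4.4 (i).** If all relations are `≤` and all off-diagonal entries of every
`Bₖ` are nonpositive, then the Shor SDP relaxation is exact for every right-hand side:
`η(δ) = ζ(δ)` for every `δ ∈ ℝᵐ`. -/
theorem offdiag_nonpos_sdpr_exact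
    (nn m : ℕ) (hnn : 0 < nn) (hm : 0 < m)
    (B : Fin (m + 1) → Matrix (Fin (nn + 1)) (Fin (nn + 1)) ℝ)
    (hBsymm : ∀ k, (B k).IsSymm)
    (hBcorner : ∀ k, B k (Fin.last nn) (Fin.last nn) = 0)
    (hoffdiag : ∀ (k : Fin (m + 1)) (i j : Fin (nn + 1)), i ≠ j → B k i j ≤ 0) :
    ∀ δ : Fin m → ℝ, sdprVal nn m B δ = qcqpVal nn m B δ := by
  intro δ
  apply le_antisymm
  · apply le_sInf
    rintro y ⟨u, hu, rfl⟩
    apply sInf_le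
    refine ⟨Matrix.of fun i j =>
      (Fin.snoc u 1 : Fin (nn+1) → ℝ) i * (Fin.snoc u 1 : Fin (nn+1) → ℝ) j,
      ⟨posSemidef_outer _, ?_, ?_⟩, ?_⟩
    · simp [Fin.snoc_last]
    · intro k; rw [← quadF_eq_mInner]; exact hu k
    · rw [← quadF_eq_mInner]
  · apply le_sInf
    rintro y ⟨X, ⟨hPSD, hcorner, hfeas⟩, rfl⟩
    set u : Fin nn → ℝ := fun i => Real.sqrt (X i.castSucc i.castSucc) with hu
    have key : ∀ k, mInner (B k) (Matrix.of fun i j =>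
        (Fin.snoc u 1 : Fin (nn+1) → ℝ) i * (Fin.snoc u 1 : Fin (nn+1) → ℝ) j)
        ≤ mInner (B k) X := by
      intro k
      unfold mInner
      refine Finset.sum_le_sum fun i _ => Finset.sum_le_sum fun j _ => ?_
      by_cases hij : i = j
      · subst hij
        rw [Matrix.of_apply, hu, snoc_sqrt_diag hcorner,
          Real.mul_self_sqrt (psd_diag_nonneg hPSD i)]
      · refine mul_le_mul_of_nonpos_left ?_ (hoffdiag k i j hij)
        rw [Matrix.of_apply, hu, snoc_sqrt_diag hcorner, snoc_sqrt_diag hcorner]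
        exact psd_entry_le hPSD i j
    have hfu : qcqpFeas nn m B δ u := fun k => by
      rw [quadF_eq_mInner]
      exact le_trans (key k.succ) (hfeas k)
    refine le_trans (sInf_le ⟨u, hfu, rfl⟩) ?_
    have : quadF (B 0) u ≤ mInner (B 0) X := by
      rw [quadF_eq_mInner]; exact key 0
    exact_mod_cast this
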